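/- arXiv:1210.5032 — 5 statements merged into one kernel-verified Lean document; each statement's English description precedes it below -/
import Mathlib

section
/- For any positive reals a and b and any real S ≥ 1, (a+b)^S ≤ 2^S b^S + a^S (1 + 2^(S+1) b / a). -/
theorem stmt0 (a b S : ℝ) (ha : 0 < a) (hb : 0 < b) (hS : 1 ≤ S) :
    (a + b) ^ S ≤ 2 ^ S * b ^ S + a ^ S * (1 + 2 ^ (S + 1) * b / a) := by
  have hpos2 : (0:ℝ) ≤ 2 ^ S * b ^ S := by positivity
  have hposA : (0:ℝ) ≤ a ^ S * (1 + 2 ^ (S + 1) * b / a) := by positivity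
  rcases le_total a b with hab | hab
  · -- a ≤ b : (a+b)^S ≤ (2b)^S = 2^S b^S
    have h1 : (a + b) ^ S ≤ (2 * b) ^ S := by
      apply Real.rpow_le_rpow (by positivity) (by linarith) (by linarith)
    have h2 : (2 * b) ^ S = 2 ^ S * b ^ S :=
      Real.mul_rpow (by norm_num) hb.le
    linarith [h1, h2.le, hposA]
  · -- b ≤ a : use convexity chord on [1,2] at 1 + b/a
    set t := b / a with ht
    have ht0 : 0 ≤ t := by positivity
    have ht1 : t ≤ 1 := (div_le_one ha).mpr hab
    have chord : (1 + t) ^ S ≤ (1 - t) * 1 ^ S + t * 2 ^ S := by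
      have h := (convexOn_rpow hS).2 (x := (1:ℝ)) (y := (2:ℝ))
        (by norm_num : (1:ℝ) ∈ Set.Ici (0:ℝ)) (by norm_num : (2:ℝ) ∈ Set.Ici (0:ℝ))
        (by linarith : 0 ≤ 1 - t) ht0 (by ring)
      simp only [smul_eq_mul] at h
      have e : (1 - t) * 1 + t * 2 = 1 + t := by ring
      rw [e] at h
      exact h
    have hEq : (a + b) ^ S = a ^ S * (1 + t) ^ S := by
      rw [← Real.mul_rpow ha.le (by linarith)]
      congr 1
      rw [ht]
      field_simp
    have h2S : (2:ℝ) ^ S - 1 ≤ 2 ^ (S + 1) := by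
      have : (2:ℝ) ^ (S + 1) = 2 * 2 ^ S := by
        rw [Real.rpow_add (by norm_num), Real.rpow_one]; ring
      have hp : (0:ℝ) < 2 ^ S := by positivity
      linarith
    have key : (1 + t) ^ S ≤ 1 + 2 ^ (S + 1) * t := by
      have : (1 - t) * 1 ^ S + t * 2 ^ S = 1 + (2 ^ S - 1) * t := by
        rw [Real.one_rpow]; ring
      nlinarith [chord, this]
    have hfin : a ^ S * (1 + t) ^ S ≤ a ^ S * (1 + 2 ^ (S + 1) * t) := by
      apply mul_le_mul_of_nonneg_left key (by positivity)
    rw [hEq]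
    have : a ^ S * (1 + 2 ^ (S + 1) * t) = a ^ S * (1 + 2 ^ (S + 1) * b / a) := by
      rw [ht]; ring
    linarith [hfin, this.le, hpos2]
end

section
/- For any non-increasing positive function h on the positive reals and any positive real γ, the series ∑_{n≥1} n^{-1} h(n^γ) converges if and only if ∑_{n≥1} n^{-1} h(n) converges. -/
open Finset

private def Pp (h : ℝ → ℝ) (γ : ℝ) : Prop :=
  Summable (fun n : ℕ => ((n + 1 : ℝ))⁻¹ * h (((n : ℝ) + 1) ^ γ))

private lemma hyp_pos {h : ℝ → ℝ} (hpos : ∀ x, 0 ≤ x → 0 < h x) (δ : ℝ) :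
    ∀ x, 0 ≤ x → 0 < (fun x => h (x ^ δ)) x := fun x hx =>
  hpos _ (Real.rpow_nonneg hx δ)

private lemma hyp_mono {h : ℝ → ℝ} (hmono : AntitoneOn h (Set.Ici (0 : ℝ)))
    {δ : ℝ} (hδ : 0 ≤ δ) : AntitoneOn (fun x => h (x ^ δ)) (Set.Ici (0 : ℝ)) := by
  intro x hx y hy hxy
  exact hmono (Set.mem_Ici.2 (Real.rpow_nonneg hx δ))
    (Set.mem_Ici.2 (Real.rpow_nonneg hy δ)) (Real.rpow_le_rpow hx hxy hδ)

private lemma L1 {h : ℝ → ℝ} (hpos : ∀ x, 0 ≤ x → 0 < h x)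
    (hmono : AntitoneOn h (Set.Ici (0 : ℝ))) {γ δ : ℝ} (hγδ : γ ≤ δ)
    (H : Pp h γ) : Pp h δ := by
  refine H.of_nonneg_of_le (fun n => ?_) (fun n => ?_)
  · have h1 : (0:ℝ) ≤ ((n:ℝ) + 1)⁻¹ := by positivity
    have h2 : (0:ℝ) ≤ h (((n : ℝ) + 1) ^ δ) :=
      (hpos (((n : ℝ) + 1) ^ δ) (Real.rpow_nonneg (by positivity) δ)).le
    exact mul_nonneg h1 h2
  · have h1 : (1:ℝ) ≤ (n : ℝ) + 1 := by linarith [n.cast_nonneg (α := ℝ)]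
    have harg : ((n : ℝ) + 1) ^ γ ≤ ((n : ℝ) + 1) ^ δ :=
      Real.rpow_le_rpow_of_exponent_le h1 hγδ
    have := hmono (Set.mem_Ici.2 (Real.rpow_nonneg (by positivity) γ))
      (Set.mem_Ici.2 (Real.rpow_nonneg (by positivity) δ)) harg
    have hinv : (0:ℝ) ≤ ((n:ℝ) + 1)⁻¹ := by positivity
    exact mul_le_mul_of_nonneg_left this hinv

private lemma L3 (h : ℝ → ℝ) (γ δ : ℝ) :
    Pp (fun x => h (x ^ δ)) γ ↔ Pp h (γ * δ) := by
  refine summable_congr fun n => ?_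
  have : (((n : ℝ) + 1) ^ γ) ^ δ = ((n : ℝ) + 1) ^ (γ * δ) :=
    (Real.rpow_mul (by positivity) γ δ).symm
  simp only [this]

private lemma L2 {h : ℝ → ℝ} (hpos : ∀ x, 0 ≤ x → 0 < h x)
    (hmono : AntitoneOn h (Set.Ici (0 : ℝ))) (H : Pp h 2) : Pp h 1 := by
  classical
  set g : ℕ → ℝ := fun m => ((m + 1 : ℝ))⁻¹ * h (((m : ℝ) + 1) ^ (2:ℝ)) with hg
  have Hg : Summable g := H
  have hg0 : ∀ m, 0 ≤ g m := fun m => by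
    have : (0:ℝ) < h (((m : ℝ) + 1) ^ (2:ℝ)) :=
      hpos _ (Real.rpow_nonneg (by positivity) _)
    positivity
  -- rewrite g's rpow as a product
  have grw : ∀ m : ℕ, 1 ≤ m → g (m - 1) = ((m:ℝ))⁻¹ * h ((m:ℝ) * (m:ℝ)) := by
    intro m hm
    have hc : ((m - 1 : ℕ) : ℝ) + 1 = (m : ℝ) := by
      rw [Nat.cast_sub hm]; push_cast; ring
    have h2 : ((m:ℝ)) ^ (2:ℝ) = (m:ℝ) * (m:ℝ) := by
      rw [show (2:ℝ) = ((2:ℕ):ℝ) by norm_num, Real.rpow_natCast]; ring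
    simp only [hg, hc, h2]
  set F : ℕ → ℝ := fun m => ((m:ℝ) * (m:ℝ))⁻¹ * h ((m:ℝ) * (m:ℝ)) with hF
  set s : ℕ → ℕ := fun n => Nat.sqrt (n + 1) with hs
  have hs1 : ∀ n, 1 ≤ s n := fun n => Nat.sqrt_pos.2 n.succ_pos
  have hF0 : ∀ m, 1 ≤ m → 0 ≤ F m := by
    intro m hm
    have hmR : (1:ℝ) ≤ (m:ℝ) := by exact_mod_cast hm
    have : (0:ℝ) < h ((m:ℝ) * (m:ℝ)) := hpos _ (by nlinarith)
    have : (0:ℝ) ≤ ((m:ℝ) * (m:ℝ))⁻¹ := by positivity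
    positivity
  -- step 1 : termwise bound
  have step1 : ∀ n : ℕ, ((n + 1 : ℝ))⁻¹ * h ((n : ℝ) + 1) ≤ F (s n) := by
    intro n
    set m := s n with hm
    have hm1 : 1 ≤ m := hs1 n
    have hmR : (1:ℝ) ≤ (m:ℝ) := by exact_mod_cast hm1
    have h1 : (m * m : ℕ) ≤ n + 1 := Nat.sqrt_le (n + 1)
    have h1R : (m:ℝ) * (m:ℝ) ≤ (n:ℝ) + 1 := by exact_mod_cast h1
    have hmmpos : (0:ℝ) < (m:ℝ) * (m:ℝ) := by nlinarith
    have hh : h ((n:ℝ) + 1) ≤ h ((m:ℝ) * (m:ℝ)) :=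
      hmono (Set.mem_Ici.2 hmmpos.le) (Set.mem_Ici.2 (by positivity)) h1R
    have hinv : ((n:ℝ) + 1)⁻¹ ≤ ((m:ℝ) * (m:ℝ))⁻¹ :=
      inv_anti₀ hmmpos h1R
    have hhpos : (0:ℝ) ≤ h ((n:ℝ) + 1) := (hpos _ (by positivity)).le
    exact mul_le_mul hinv hh hhpos (by positivity)
  -- step 3 : fiber bound
  have step3 : ∀ m : ℕ, 1 ≤ m → ((2 * m + 1 : ℕ) : ℝ) * F m ≤ 3 * g (m - 1) := by
    intro m hm
    have hmR : (1:ℝ) ≤ (m:ℝ) := by exact_mod_cast hm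
    have hmpos : (0:ℝ) < (m:ℝ) := by linarith
    have hhpos : (0:ℝ) ≤ h ((m:ℝ) * (m:ℝ)) := (hpos _ (by nlinarith)).le
    have hFm : F m = ((m:ℝ) * (m:ℝ))⁻¹ * h ((m:ℝ) * (m:ℝ)) := rfl
    have hcast : ((2 * m + 1 : ℕ) : ℝ) = 2 * (m:ℝ) + 1 := by push_cast; ring
    rw [grw m hm, hFm, hcast]
    have e1 : (2 * (m:ℝ) + 1) * ((m:ℝ) * (m:ℝ))⁻¹ ≤ 3 * (m:ℝ)⁻¹ := by
      rw [mul_inv, ← mul_assoc]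
      have h2 : (2 * (m:ℝ) + 1) * (m:ℝ)⁻¹ ≤ 3 := by
        rw [mul_inv_le_iff₀ hmpos]
        linarith
      exact mul_le_mul_of_nonneg_right h2 (by positivity)
    calc (2 * (m:ℝ) + 1) * (((m:ℝ) * (m:ℝ))⁻¹ * h ((m:ℝ) * (m:ℝ)))
        = ((2 * (m:ℝ) + 1) * ((m:ℝ) * (m:ℝ))⁻¹) * h ((m:ℝ) * (m:ℝ)) := by ring
      _ ≤ (3 * (m:ℝ)⁻¹) * h ((m:ℝ) * (m:ℝ)) := mul_le_mul_of_nonneg_right e1 hhpos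
      _ = 3 * ((m:ℝ)⁻¹ * h ((m:ℝ) * (m:ℝ))) := by ring
  -- partial sums bounded
  have hsum : Summable (fun n : ℕ => ((n + 1 : ℝ))⁻¹ * h ((n : ℝ) + 1)) := by
    refine summable_of_sum_range_le (c := 3 * ∑' m, g m) (fun n => ?_) (fun K => ?_)
    · have h1 : (0:ℝ) ≤ ((n:ℝ) + 1)⁻¹ := by positivity
      have h2 : (0:ℝ) ≤ h ((n : ℝ) + 1) := (hpos _ (by positivity)).le
      exact mul_nonneg h1 h2
    · have cardbd : ∀ m ∈ (range K).image s,
          ((range K).filter (fun n => s n = m)).card ≤ 2 * m + 1 := by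
        intro m hmem
        have hsub : (range K).filter (fun n => s n = m) ⊆
            Finset.Ico (m * m - 1) ((m + 1) * (m + 1) - 1) := by
          intro n hn
          simp only [mem_filter, mem_range] at hn
          obtain ⟨-, hsn⟩ := hn
          have h1 : m * m ≤ n + 1 := hsn ▸ Nat.sqrt_le (n + 1)
          have h2 : n + 1 < (m + 1) * (m + 1) := hsn ▸ Nat.lt_succ_sqrt (n + 1)
          simp only [Finset.mem_Ico]
          omega
        calc ((range K).filter (fun n => s n = m)).card
            ≤ (Finset.Ico (m * m - 1) ((m + 1) * (m + 1) - 1)).card :=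
              Finset.card_le_card hsub
          _ ≤ 2 * m + 1 := by
              rw [Nat.card_Ico]
              have : (m + 1) * (m + 1) = m * m + 2 * m + 1 := by ring
              omega
      have mem1 : ∀ m ∈ (range K).image s, 1 ≤ m := by
        intro m hmem
        obtain ⟨n, -, rfl⟩ := Finset.mem_image.1 hmem
        exact hs1 n
      calc ∑ n ∈ range K, ((n + 1 : ℝ))⁻¹ * h ((n : ℝ) + 1)
          ≤ ∑ n ∈ range K, F (s n) := Finset.sum_le_sum fun n _ => step1 n
        _ = ∑ m ∈ (range K).image s,
              ((range K).filter (fun n => s n = m)).card • F m := Finset.sum_comp F s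
        _ ≤ ∑ m ∈ (range K).image s, 3 * g (m - 1) := by
            refine Finset.sum_le_sum fun m hmem => ?_
            have hm1 := mem1 m hmem
            rw [nsmul_eq_mul]
            calc (((range K).filter (fun n => s n = m)).card : ℝ) * F m
                ≤ ((2 * m + 1 : ℕ) : ℝ) * F m := by
                  refine mul_le_mul_of_nonneg_right ?_ (hF0 m hm1)
                  exact_mod_cast cardbd m hmem
              _ ≤ 3 * g (m - 1) := step3 m hm1
        _ = 3 * ∑ m ∈ (range K).image s, g (m - 1) := by rw [Finset.mul_sum]
        _ = 3 * ∑ k ∈ ((range K).image s).image (· - 1), g k := by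
            congr 1
            refine (Finset.sum_image fun a ha b hb hab => ?_).symm
            have := mem1 a ha; have := mem1 b hb
            omega
        _ ≤ 3 * ∑' m, g m := by
            have := Summable.sum_le_tsum (((range K).image s).image (· - 1))
              (fun i _ => hg0 i) Hg
            linarith
  exact (summable_congr fun n : ℕ => by rw [Real.rpow_one]).2 hsum

private lemma ind : ∀ (k : ℕ) (h : ℝ → ℝ), (∀ x, 0 ≤ x → 0 < h x) →
    AntitoneOn h (Set.Ici (0 : ℝ)) → Pp h ((2:ℝ) ^ k) → Pp h 1 := by
  intro k
  induction k with
  | zero => intro h _ _ H; simpa using H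
  | succ k IH =>
    intro h hpos hmono H
    have H2 : Pp (fun x => h (x ^ (2:ℝ))) ((2:ℝ) ^ k) := by
      rw [L3]
      have : (2:ℝ) ^ k * 2 = (2:ℝ) ^ (k + 1) := (pow_succ 2 k).symm
      rwa [this]
    have := IH (fun x => h (x ^ (2:ℝ))) (hyp_pos hpos 2)
      (hyp_mono hmono (by norm_num)) H2
    rw [L3, one_mul] at this
    exact L2 hpos hmono this

private lemma forward (h : ℝ → ℝ) (hpos : ∀ x, 0 ≤ x → 0 < h x)
    (hmono : AntitoneOn h (Set.Ici (0 : ℝ))) (γ : ℝ) (H : Pp h γ) : Pp h 1 := by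
  obtain ⟨n, hn⟩ := exists_nat_gt γ
  have hle : γ ≤ (2:ℝ) ^ n := by
    have : (n:ℝ) ≤ (2:ℝ) ^ n := by
      have := (Nat.lt_two_pow_self (n := n)).le
      exact_mod_cast this
    linarith
  exact ind n h hpos hmono (L1 hpos hmono hle H)

theorem stmt1 (h : ℝ → ℝ) (γ : ℝ) (hγ : 0 < γ)
    (hpos : ∀ x, 0 ≤ x → 0 < h x) (hmono : AntitoneOn h (Set.Ici (0 : ℝ))) :
    Summable (fun n : ℕ => ((n + 1 : ℝ))⁻¹ * h (((n : ℝ) + 1) ^ γ)) ↔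
      Summable (fun n : ℕ => ((n + 1 : ℝ))⁻¹ * h ((n : ℝ) + 1)) := by
  have key : ∀ δ : ℝ, Pp h δ ↔ Summable (fun n : ℕ =>
      ((n + 1 : ℝ))⁻¹ * h (((n : ℝ) + 1) ^ δ)) := fun _ => Iff.rfl
  have rpow1 : Pp h 1 ↔ Summable (fun n : ℕ => ((n + 1 : ℝ))⁻¹ * h ((n : ℝ) + 1)) := by
    refine summable_congr fun n => ?_
    rw [Real.rpow_one]
  constructor
  · intro H
    exact rpow1.1 (forward h hpos hmono γ H)
  · intro H
    have hpos' := hyp_pos hpos γ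
    have hmono' := hyp_mono hmono hγ.le
    have H1 : Pp (fun x => h (x ^ γ)) γ⁻¹ := by
      rw [L3, inv_mul_cancel₀ hγ.ne']
      exact rpow1.2 H
    have := forward _ hpos' hmono' γ⁻¹ H1
    rw [L3, one_mul] at this
    exact this
end

section
/- Let (X_n)_{n≥1} be random variables with common distribution equal to that of X_0, where E(X_0² L(X_0)/L(L(X_0))) < ∞ with L(x) = log(e + |x|). For γ > 0, define X*_ℓ = X_ℓ 1_{|X_ℓ| > 2^{γr}} − E(X_ℓ 1_{|X_ℓ| > 2^{γr}}) for ℓ ∈ {2^r, …, 2^{r+1}−1}. Then ∑_{n≥4} E((X*_n)²)/(n log log n) < ∞. -/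
open MeasureTheory Real

section Stmt9Aux


lemma stmt9_ll2 : (-0.4427:ℝ) ≤ Real.log (Real.log 2) := by
  have h2 : (0.6931471803:ℝ) < Real.log 2 := Real.log_two_gt_d9
  have hpos : (0:ℝ) < Real.log 2 := by linarith
  have h := Real.log_le_sub_one_of_pos (show (0:ℝ) < (Real.log 2)⁻¹ by positivity)
  rw [Real.log_inv] at h
  have hinv : (Real.log 2)⁻¹ ≤ (0.6931471803:ℝ)⁻¹ := inv_anti₀ (by norm_num) (le_of_lt h2)
  have : ((0.6931471803:ℝ))⁻¹ ≤ 1.4427 := by norm_num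
  linarith

lemma stmt9_clow {r : ℕ} (hr : 2 ≤ r) : (0.25:ℝ) ≤ Real.log (r * Real.log 2) := by
  have h2 : (0.6931471803:ℝ) < Real.log 2 := Real.log_two_gt_d9
  have h1 : Real.log (2 * Real.log 2) ≤ Real.log (r * Real.log 2) := by
    apply Real.log_le_log (by positivity)
    have : (2:ℝ) ≤ r := by exact_mod_cast hr
    nlinarith
  have h3 : Real.log (2 * Real.log 2) = Real.log 2 + Real.log (Real.log 2) := by
    rw [Real.log_mul (by norm_num) (by positivity)]
  nlinarith [stmt9_ll2]

lemma stmt9_cinv {r : ℕ} (hr : 2 ≤ r) : (Real.log (r * Real.log 2))⁻¹ ≤ 4 := by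
  have := stmt9_clow hr
  calc (Real.log (r * Real.log 2))⁻¹ ≤ (0.25:ℝ)⁻¹ := inv_anti₀ (by norm_num) this
    _ = 4 := by norm_num

lemma stmt9_small (R : ℕ) (hR : R ≤ 10) :
    ∑ r ∈ Finset.Icc 2 R, (Real.log (r * Real.log 2))⁻¹ ≤ 10 * ((R:ℝ)+1) / Real.log ((R:ℝ)+1) := by
  have hsum : ∑ r ∈ Finset.Icc 2 R, (Real.log (r * Real.log 2))⁻¹ ≤ (Finset.Icc 2 R).card • (4:ℝ) :=
    Finset.sum_le_card_nsmul _ _ _ (fun r hr => stmt9_cinv (Finset.mem_Icc.mp hr).1)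
  rcases Nat.lt_or_ge R 2 with h2 | h2
  · have he : Finset.Icc 2 R = ∅ := by
      apply Finset.Icc_eq_empty; omega
    rw [he]
    simp only [Finset.sum_empty]
    apply div_nonneg
    · positivity
    · apply Real.log_nonneg; push_cast; linarith [Nat.cast_nonneg (α := ℝ) R]
  · have hcard : (Finset.Icc 2 R).card = R - 1 := by
      rw [Nat.card_Icc]; omega
    have hcard' : ((Finset.Icc 2 R).card : ℝ) = (R:ℝ) - 1 := by
      rw [hcard]
      have : (1:ℕ) ≤ R := by omega
      push_cast [this]
      ring
    have hsum' : ∑ r ∈ Finset.Icc 2 R, (Real.log (r * Real.log 2))⁻¹ ≤ 4 * ((R:ℝ) - 1) := by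
      rw [nsmul_eq_mul, hcard'] at hsum
      nlinarith
    have hlog : Real.log ((R:ℝ)+1) ≤ 2.7727 := by
      have h16 : Real.log ((R:ℝ)+1) ≤ Real.log 16 := by
        apply Real.log_le_log (by positivity)
        have : (R:ℝ) ≤ 10 := by exact_mod_cast hR
        linarith
      have : Real.log 16 = 4 * Real.log 2 := by
        rw [show (16:ℝ) = 2^(4:ℕ) by norm_num, Real.log_pow]; norm_num
      have h2 : Real.log 2 < 0.6931471808 := Real.log_two_lt_d9
      nlinarith
    have hlogpos : 0 < Real.log ((R:ℝ)+1) := by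
      apply Real.log_pos
      have : (2:ℝ) ≤ R := by exact_mod_cast h2
      linarith
    rw [le_div_iff₀ hlogpos]
    have hR9 : (R:ℝ) ≤ 10 := by exact_mod_cast hR
    have h2' : (2:ℝ) ≤ (R:ℝ) := by exact_mod_cast h2
    nlinarith [mul_le_mul_of_nonneg_right hsum' (le_of_lt hlogpos),
      mul_le_mul_of_nonneg_left hlog (show (0:ℝ) ≤ 4*((R:ℝ)-1) by linarith)]

lemma stmt9_lemma1 (R : ℕ) :
    ∑ r ∈ Finset.Icc 2 R, (Real.log (r * Real.log 2))⁻¹ ≤ 10 * ((R:ℝ)+1) / Real.log ((R:ℝ)+1) := by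
  induction R with
  | zero => exact stmt9_small 0 (by omega)
  | succ n ih =>
    rcases Nat.lt_or_ge n 10 with hn | hn
    · exact stmt9_small (n+1) (by omega)
    · rw [Finset.sum_Icc_succ_top (by omega)]
      push_cast
      have hn10 : (10:ℝ) ≤ (n:ℝ) := by exact_mod_cast hn
      set A := Real.log ((n:ℝ)+1) with hA
      set B := Real.log ((n:ℝ)+1+1) with hB
      set D := Real.log (((n:ℝ)+1) * Real.log 2) with hD
      have hApos : (2.07:ℝ) ≤ A := by
        have h8 : Real.log (8:ℝ) ≤ A := Real.log_le_log (by norm_num) (by linarith)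
        have : Real.log 8 = 3 * Real.log 2 := by
          rw [show (8:ℝ) = 2^(3:ℕ) by norm_num, Real.log_pow]; norm_num
        have h2 : (0.6931471803:ℝ) < Real.log 2 := Real.log_two_gt_d9
        nlinarith
      have hAB : A ≤ B := Real.log_le_log (by linarith) (by linarith)
      have hBA1 : ((n:ℝ)+1)*(B-A) ≤ 1 := by
        have hq : B - A = Real.log ((((n:ℝ)+1)+1)/((n:ℝ)+1)) := by
          rw [Real.log_div (by linarith) (by linarith)]
        have hq2 : Real.log ((((n:ℝ)+1)+1)/((n:ℝ)+1)) ≤ (((n:ℝ)+1)+1)/((n:ℝ)+1) - 1 :=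
          Real.log_le_sub_one_of_pos (by positivity)
        have hq3 : (((n:ℝ)+1)+1)/((n:ℝ)+1) - 1 = 1/((n:ℝ)+1) := by field_simp; ring
        have : B - A ≤ 1/((n:ℝ)+1) := by linarith [hq, hq2, hq3]
        have h5 : ((n:ℝ)+1)*(B-A) ≤ ((n:ℝ)+1)*(1/((n:ℝ)+1)) :=
          mul_le_mul_of_nonneg_left this (by linarith)
        have h6 : ((n:ℝ)+1)*(1/((n:ℝ)+1)) = 1 := by field_simp
        linarith
      have hB' : B ≤ A + 0.1 := by
        have hq : B - A = Real.log ((((n:ℝ)+1)+1)/((n:ℝ)+1)) := by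
          rw [Real.log_div (by linarith) (by linarith)]
        have hq2 : Real.log ((((n:ℝ)+1)+1)/((n:ℝ)+1)) ≤ (((n:ℝ)+1)+1)/((n:ℝ)+1) - 1 :=
          Real.log_le_sub_one_of_pos (by positivity)
        have hq3 : (((n:ℝ)+1)+1)/((n:ℝ)+1) - 1 = 1/((n:ℝ)+1) := by field_simp; ring
        have hq4 : 1/((n:ℝ)+1) ≤ 0.1 := by
          rw [div_le_iff₀ (by linarith)]; linarith
        linarith
      have hDeq : D = A + Real.log (Real.log 2) := by
        rw [hD, hA, Real.log_mul (by linarith) (by positivity : Real.log 2 ≠ 0)]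
      have hDA : A - 0.4427 ≤ D := by rw [hDeq]; linarith [stmt9_ll2]
      have hDle : D ≤ A := by
        rw [hDeq]
        have : Real.log (Real.log 2) ≤ 0 := by
          apply Real.log_nonpos
          · positivity
          · linarith [Real.log_two_lt_d9]
        linarith
      have hDpos : (0:ℝ) < D := by linarith
      have hApos' : (0:ℝ) < A := by linarith
      have hBpos : (0:ℝ) < B := by linarith
      have key : (10*((n:ℝ)+1)*D + A) * B ≤ 10*((n:ℝ)+1+1) * (A * D) := by
        have e0 : (10*((n:ℝ)+1)*D + A)*B
            = 10*((n:ℝ)+1)*D*A + (10*D)*(((n:ℝ)+1)*(B-A)) + A*B := by ring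
        have e0' : 10*((n:ℝ)+1+1)*(A*D) = 10*((n:ℝ)+1)*D*A + 10*D*(A-1) + 10*D := by ring
        have e1 : (10*D)*(((n:ℝ)+1)*(B-A)) ≤ (10*D)*1 :=
          mul_le_mul_of_nonneg_left hBA1 (by positivity)
        have e2 : A*B ≤ A*(A+0.1) := mul_le_mul_of_nonneg_left hB' (le_of_lt hApos')
        have e3 : A*(A+0.1) ≤ 10*(A-0.4427)*(A-1) := by nlinarith [sq_nonneg (A-2.07)]
        have e4 : 10*(A-0.4427)*(A-1) ≤ 10*D*(A-1) := by nlinarith [hDA, hApos]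
        linarith
      have step : 10*((n:ℝ)+1)/A + D⁻¹ ≤ 10*((n:ℝ)+1+1)/B := by
        have h1 : 10*((n:ℝ)+1)/A + D⁻¹ = (10*((n:ℝ)+1)*D + A)/(A*D) := by
          field_simp
        rw [h1, div_le_div_iff₀ (by positivity) hBpos]
        linarith [key]
      linarith [ih, step]


set_option maxHeartbeats 1000000 in
lemma stmt9_lemma2 (γ x : ℝ) (hγ : 0 < γ) (R : ℕ) (hR2 : 2 ≤ R)
    (hRfloor : R = ⌊Real.log |x| / (γ * Real.log 2)⌋₊) :
    10 * ((R:ℝ)+1) / Real.log ((R:ℝ)+1) ≤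
      (60 * max (Real.log (γ * Real.log 2)) 1 / (γ * Real.log 2)) *
        (Real.log (Real.exp 1 + |x|) / Real.log (Real.exp 1 + Real.log (Real.exp 1 + |x|))) := by
  have hl2 : (0.6931471803:ℝ) < Real.log 2 := Real.log_two_gt_d9
  set a := γ * Real.log 2 with ha
  have hapos : 0 < a := by positivity
  set t := Real.log |x| with ht
  set u := t / a with hu
  -- basic facts about u and R
  have hu0 : 0 ≤ u := by
    by_contra h
    push_neg at h
    have : ⌊u⌋₊ = 0 := Nat.floor_of_nonpos (le_of_lt h)
    omega
  have hRu : (R:ℝ) ≤ u := by rw [hRfloor]; exact Nat.floor_le hu0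
  have hR2' : (2:ℝ) ≤ (R:ℝ) := by exact_mod_cast hR2
  have hu2 : (2:ℝ) ≤ u := le_trans hR2' hRu
  have huR : u < (R:ℝ) + 1 := by rw [hRfloor]; exact Nat.lt_floor_add_one u
  have htu : t = u * a := by rw [hu]; field_simp
  have htpos : 0 < t := by rw [htu]; exact mul_pos (by linarith) hapos
  have hx1 : 1 < |x| := by
    by_contra h
    push_neg at h
    have : Real.log |x| ≤ 0 := Real.log_nonpos (abs_nonneg x) h
    linarith
  have hxpos : (0:ℝ) < |x| := by linarith
  set Lx := Real.log (Real.exp 1 + |x|) with hLx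
  set LLx := Real.log (Real.exp 1 + Lx) with hLLx
  have hepos : (0:ℝ) < Real.exp 1 := Real.exp_pos 1
  have he1 : (2.7182818283:ℝ) < Real.exp 1 := Real.exp_one_gt_d9
  have he2 : Real.exp 1 < 2.7182818286 := Real.exp_one_lt_d9
  have htL : t ≤ Lx := Real.log_le_log hxpos (by linarith)
  have hL1 : 1 ≤ Lx := by
    have : Real.log (Real.exp 1) ≤ Lx := Real.log_le_log hepos (by linarith)
    rwa [Real.log_exp] at this
  have hLt : Lx ≤ t + 2 := by
    have h1 : Real.exp 1 + |x| ≤ (Real.exp 1 + 1) * |x| := by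
      have hh : 0 ≤ (Real.exp 1) * (|x| - 1) := mul_nonneg (le_of_lt hepos) (by linarith)
      nlinarith [hh]
    have h2 : Lx ≤ Real.log ((Real.exp 1 + 1) * |x|) := Real.log_le_log (by positivity) h1
    have h3 : Real.log ((Real.exp 1 + 1) * |x|) = Real.log (Real.exp 1 + 1) + t := by
      rw [Real.log_mul (by positivity) (ne_of_gt hxpos)]
    have h4 : Real.log (Real.exp 1 + 1) ≤ 2 := by
      have e2 : Real.exp 1 + 1 ≤ Real.exp 1 ^ (2:ℕ) := by
        have hsq : (2.7182818283:ℝ)*(2.7182818283:ℝ) ≤ Real.exp 1 * Real.exp 1 :=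
          mul_le_mul (le_of_lt he1) (le_of_lt he1) (by norm_num) (le_of_lt hepos)
        rw [pow_two]
        linarith
      have := Real.log_le_log (by positivity) e2
      rwa [Real.exp_one_pow, Real.log_exp] at this
      -- log (exp 2) = 2
    linarith
  have hLL1 : 1 ≤ LLx := by
    have : Real.log (Real.exp 1) ≤ LLx := Real.log_le_log hepos (by linarith)
    rwa [Real.log_exp] at this
  have hLLpos : 0 < LLx := by linarith
  set A := Real.log ((R:ℝ)+1) with hA
  have hA1 : 1 ≤ A := by
    have : Real.log (Real.exp 1) ≤ A := Real.log_le_log hepos (by linarith)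
    rwa [Real.log_exp] at this
  have hApos : 0 < A := by linarith
  set K := Real.log a with hK
  set C := 60 * max K 1 / a with hC
  have hmax1 : (1:ℝ) ≤ max K 1 := le_max_right _ _
  have hCge : 60 / a ≤ C := by
    rw [hC]
    gcongr
    linarith
  -- reduce to cross-multiplied form
  rw [← mul_div_assoc, div_le_div_iff₀ hApos hLLpos]
  -- goal : 10 * (R+1) * LLx ≤ C * Lx * A
  have hR15 : (R:ℝ) + 1 ≤ 1.5 * u := by linarith
  rcases le_or_gt LLx (4*A) with hc | hc
  · -- moderate case
    have g1 : 10*((R:ℝ)+1)*LLx ≤ 10*((R:ℝ)+1)*(4*A) :=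
      mul_le_mul_of_nonneg_left hc (by linarith)
    have g2 : 40*((R:ℝ)+1) ≤ 60*u := by linarith
    have g3 : 10*((R:ℝ)+1)*(4*A) = 40*((R:ℝ)+1)*A := by ring
    have g4 : 40*((R:ℝ)+1)*A ≤ 60*u*A := mul_le_mul_of_nonneg_right g2 (le_of_lt hApos)
    have g5 : 60*u*A = (60/a)*t*A := by rw [hu]; field_simp
    have g6 : (60/a)*t*A ≤ (60/a)*Lx*A := by
      apply mul_le_mul_of_nonneg_right _ (le_of_lt hApos)
      apply mul_le_mul_of_nonneg_left htL (by positivity)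
    have g7 : (60/a)*Lx*A ≤ C*Lx*A := by
      apply mul_le_mul_of_nonneg_right _ (le_of_lt hApos)
      apply mul_le_mul_of_nonneg_right hCge (by linarith)
    linarith
  · -- large case
    have hLL4 : 4 < LLx := by linarith
    have hexp : Real.exp 1 + Lx = Real.exp LLx := by
      rw [hLLx, Real.exp_log (by linarith)]
    have hexp4 : Real.exp 4 ≤ Real.exp LLx := Real.exp_le_exp.mpr (by linarith)
    have hexp4' : (54:ℝ) < Real.exp 4 := by
      have hp : (2.7182818283:ℝ)^(4:ℕ) ≤ Real.exp 1^(4:ℕ) :=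
        pow_le_pow_left₀ (by norm_num) (le_of_lt he1) 4
      have hval : (54:ℝ) < (2.7182818283:ℝ)^(4:ℕ) := by norm_num
      have heq : Real.exp 1 ^ (4:ℕ) = Real.exp 4 := by
        rw [Real.exp_one_pow]; norm_num
      linarith
    have hLbig : 50 ≤ Lx := by linarith
    have htbig : 48 ≤ t := by linarith
    have hlogt : (3.465:ℝ) ≤ Real.log t := by
      have h32 : Real.log 32 ≤ Real.log t := Real.log_le_log (by norm_num) (by linarith)
      have : Real.log 32 = 5 * Real.log 2 := by
        rw [show (32:ℝ) = 2^(5:ℕ) by norm_num, Real.log_pow]; norm_num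
      linarith
    have hlogtpos : 0 < Real.log t := by linarith
    have hLLlog : LLx ≤ 0.6932 + Real.log t := by
      have h1 : Real.exp 1 + Lx ≤ 2 * t := by linarith
      have h2 : LLx ≤ Real.log (2*t) := Real.log_le_log (by linarith) h1
      have h3 : Real.log (2*t) = Real.log 2 + Real.log t :=
        Real.log_mul (by norm_num) (ne_of_gt htpos)
      have hl2' : Real.log 2 < 0.6931471808 := Real.log_two_lt_d9
      linarith
    have hLL121 : LLx ≤ 1.21 * Real.log t := by linarith
    have hAu : Real.log u ≤ A := Real.log_le_log (by linarith) (by linarith)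
    have hlogu : Real.log u = Real.log t - K := by
      rw [hu, Real.log_div (ne_of_gt htpos) (ne_of_gt hapos)]
    have hAlt : A < 0.3025 * Real.log t := by linarith
    have hKbig : 0.69 * Real.log t ≤ K := by linarith
    have hK1 : 1 ≤ K := by linarith
    have hmaxK : max K 1 = K := max_eq_left hK1
    have hlogtK : Real.log t ≤ 1.5 * K := by linarith
    -- chain
    have c1 : 10*((R:ℝ)+1)*LLx ≤ 15*u*LLx := by
      apply mul_le_mul_of_nonneg_right _ (le_of_lt hLLpos)
      linarith
    have c2 : 15*u*LLx ≤ 15*u*(1.21*Real.log t) := by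
      apply mul_le_mul_of_nonneg_left hLL121 (by linarith)
    have c3 : 15*u*(1.21*Real.log t) ≤ 15*u*(1.21*(1.5*K)) := by
      apply mul_le_mul_of_nonneg_left _ (by linarith)
      linarith
    have huK : 0 ≤ u*K := mul_nonneg hu0 (by linarith)
    have c4 : 15*u*(1.21*(1.5*K)) ≤ 60*u*K := by linarith [huK]
    have c5 : 60*u*K ≤ 60*u*K*A := by
      have hh : 0 ≤ (u*K)*(A-1) := mul_nonneg huK (by linarith)
      linarith [hh]
    have c6 : 60*u*K*A = (60*K/a)*t*A := by rw [hu]; ring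
    have c7 : (60*K/a)*t*A ≤ (60*K/a)*Lx*A := by
      apply mul_le_mul_of_nonneg_right _ (le_of_lt hApos)
      apply mul_le_mul_of_nonneg_left htL (by positivity)
    have c8 : C = 60*K/a := by rw [hC, hmaxK]
    rw [c8]
    linarith

lemma stmt9_lemma3 (γ : ℝ) (hγ : 0 < γ) (x : ℝ) (s : Finset ℕ) (hs : ∀ r ∈ s, 2 ≤ r) :
    ∑ r ∈ s, (if (2:ℝ)^(γ*(r:ℝ)) < |x| then (Real.log (r * Real.log 2))⁻¹ else 0)
      ≤ (60 * max (Real.log (γ * Real.log 2)) 1 / (γ * Real.log 2)) *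
        (Real.log (Real.exp 1 + |x|) / Real.log (Real.exp 1 + Real.log (Real.exp 1 + |x|))) := by
  have hl2 : (0.6931471803:ℝ) < Real.log 2 := Real.log_two_gt_d9
  have hepos : (0:ℝ) < Real.exp 1 := Real.exp_pos 1
  have hL1 : 1 ≤ Real.log (Real.exp 1 + |x|) := by
    have : Real.log (Real.exp 1) ≤ Real.log (Real.exp 1 + |x|) :=
      Real.log_le_log hepos (by simp [abs_nonneg])
    rwa [Real.log_exp] at this
  have hLL1 : 1 ≤ Real.log (Real.exp 1 + Real.log (Real.exp 1 + |x|)) := by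
    have : Real.log (Real.exp 1) ≤ Real.log (Real.exp 1 + Real.log (Real.exp 1 + |x|)) :=
      Real.log_le_log hepos (by linarith)
    rwa [Real.log_exp] at this
  have hCpos : 0 < 60 * max (Real.log (γ * Real.log 2)) 1 / (γ * Real.log 2) := by
    apply div_pos
    · have := le_max_right (Real.log (γ * Real.log 2)) 1
      linarith
    · positivity
  have hRHS : 0 ≤ (60 * max (Real.log (γ * Real.log 2)) 1 / (γ * Real.log 2)) *
        (Real.log (Real.exp 1 + |x|) / Real.log (Real.exp 1 + Real.log (Real.exp 1 + |x|))) := by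
    apply mul_nonneg (le_of_lt hCpos)
    apply div_nonneg <;> linarith
  classical
  rw [← Finset.sum_filter]
  set s' := s.filter (fun r : ℕ => (2:ℝ)^(γ*(r:ℝ)) < |x|) with hs'
  rcases Finset.eq_empty_or_nonempty s' with he | ⟨r₀, hr₀⟩
  · rw [he, Finset.sum_empty]; exact hRHS
  · set R := ⌊Real.log |x| / (γ * Real.log 2)⌋₊ with hR
    have hsub : s' ⊆ Finset.Icc 2 R := by
      intro r hr
      rw [hs', Finset.mem_filter] at hr
      obtain ⟨hrs, hrx⟩ := hr
      have h2r : 2 ≤ r := hs r hrs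
      have hlt : Real.log ((2:ℝ)^(γ*(r:ℝ))) < Real.log |x| :=
        Real.log_lt_log (Real.rpow_pos_of_pos (by norm_num) _) hrx
      rw [Real.log_rpow (by norm_num)] at hlt
      have hrlt : (r:ℝ) ≤ Real.log |x| / (γ * Real.log 2) := by
        rw [le_div_iff₀ (by positivity)]
        nlinarith
      exact Finset.mem_Icc.mpr ⟨h2r, Nat.le_floor hrlt⟩
    have hR2 : 2 ≤ R := by
      have := hsub hr₀
      rw [Finset.mem_Icc] at this
      omega
    have h1 : ∑ r ∈ s', (Real.log (r * Real.log 2))⁻¹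
        ≤ ∑ r ∈ Finset.Icc 2 R, (Real.log (r * Real.log 2))⁻¹ := by
      apply Finset.sum_le_sum_of_subset_of_nonneg hsub
      intro i hi _
      have h2i : 2 ≤ i := (Finset.mem_Icc.mp hi).1
      have := stmt9_clow h2i
      positivity
    calc ∑ r ∈ s', (Real.log (r * Real.log 2))⁻¹
        ≤ ∑ r ∈ Finset.Icc 2 R, (Real.log (r * Real.log 2))⁻¹ := h1
      _ ≤ 10 * ((R:ℝ)+1) / Real.log ((R:ℝ)+1) := stmt9_lemma1 R
      _ ≤ _ := stmt9_lemma2 γ x hγ R hR2 hR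

end Stmt9Aux

theorem stmt9 {Ω : Type*} [MeasurableSpace Ω] (μ : Measure Ω) [IsProbabilityMeasure μ]
    (X0 : Ω → ℝ) (X : ℕ → Ω → ℝ)
    (hX0meas : Measurable X0) (hXmeas : ∀ ℓ, Measurable (X ℓ))
    (hident : ∀ ℓ, Measure.map (X ℓ) μ = Measure.map X0 μ)
    (L : ℝ → ℝ) (hL : ∀ x, L x = Real.log (Real.exp 1 + |x|))
    (hmom : Integrable (fun ω => (X0 ω) ^ 2 * L (X0 ω) / L (L (X0 ω))) μ)
    (γ : ℝ) (hγ : 0 < γ)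
    (T Xstar : ℕ → Ω → ℝ)
    (hT : ∀ ℓ ω, T ℓ ω =
      if (2 : ℝ) ^ (γ * (Nat.log 2 ℓ : ℝ)) < |X ℓ ω| then X ℓ ω else 0)
    (hXstar : ∀ ℓ ω, Xstar ℓ ω = T ℓ ω - ∫ ω', T ℓ ω' ∂μ) :
    Summable (fun n : ℕ =>
      (∫ ω, (Xstar (n + 4) ω) ^ 2 ∂μ) / ((n + 4 : ℝ) * Real.log (Real.log (n + 4 : ℝ)))) := by
  classical
  have hl2 : (0.6931471803:ℝ) < Real.log 2 := Real.log_two_gt_d9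
  have hepos : (0:ℝ) < Real.exp 1 := Real.exp_pos 1
  set ν := μ.map X0 with hν
  haveI : IsProbabilityMeasure ν := Measure.isProbabilityMeasure_map hX0meas.aemeasurable
  -- facts about L
  have hL1 : ∀ y : ℝ, 1 ≤ L y := by
    intro y
    rw [hL]
    have : Real.log (Real.exp 1) ≤ Real.log (Real.exp 1 + |y|) :=
      Real.log_le_log hepos (by simp [abs_nonneg])
    rwa [Real.log_exp] at this
  have hLL2 : ∀ y : ℝ, L (L y) ≤ 2 * L y := by
    intro y
    have h0 : 0 ≤ L y := le_trans zero_le_one (hL1 y)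
    rw [hL (L y), abs_of_nonneg h0]
    have h1 : Real.exp 1 + L y ≤ Real.exp 1 * (1 + L y) := by
      have hh : 0 ≤ (Real.exp 1 - 1) * L y :=
        mul_nonneg (by linarith [Real.exp_one_gt_d9]) h0
      nlinarith [hh]
    have h2 : Real.log (Real.exp 1 + L y) ≤ Real.log (Real.exp 1 * (1 + L y)) :=
      Real.log_le_log (by positivity) h1
    have h3 : Real.log (Real.exp 1 * (1 + L y)) = 1 + Real.log (1 + L y) := by
      rw [Real.log_mul (ne_of_gt hepos) (by linarith), Real.log_exp]
    have h4 : Real.log (1 + L y) ≤ L y := by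
      have := Real.log_le_sub_one_of_pos (show (0:ℝ) < 1 + L y by linarith)
      linarith
    linarith [hL1 y]
  have hmom_nonneg : ∀ y : ℝ, 0 ≤ y ^ 2 * L y / L (L y) := fun y => by
    have := hL1 y; have := hL1 (L y); positivity
  have hX0sq : Integrable (fun ω => X0 ω ^ 2) μ := by
    apply Integrable.mono (hmom.const_mul 2) ((hX0meas.pow_const 2).aestronglyMeasurable)
    filter_upwards with ω
    rw [Real.norm_eq_abs, Real.norm_eq_abs, abs_of_nonneg (sq_nonneg _),
      abs_of_nonneg (by linarith [hmom_nonneg (X0 ω)] : (0:ℝ) ≤ 2 * (X0 ω ^ 2 * L (X0 ω) / L (L (X0 ω))))]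
    -- X0² ≤ 2 (X0² L/LL)
    have h1 := hL1 (X0 ω)
    have h2 := hL1 (L (X0 ω))
    have h3 := hLL2 (X0 ω)
    have hq : 1 ≤ 2 * L (X0 ω) / L (L (X0 ω)) := by
      rw [le_div_iff₀ (by linarith)]
      linarith
    calc X0 ω ^ 2 = X0 ω ^ 2 * 1 := by ring
      _ ≤ X0 ω ^ 2 * (2 * L (X0 ω) / L (L (X0 ω))) :=
          mul_le_mul_of_nonneg_left hq (sq_nonneg _)
      _ = 2 * (X0 ω ^ 2 * L (X0 ω) / L (L (X0 ω))) := by ring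
  -- L measurable
  have hLmeas : Measurable L := by
    have hfun : L = fun y => Real.log (Real.exp 1 + |y|) := funext hL
    rw [hfun]
    exact (Real.measurable_log.comp (measurable_const.add measurable_abs))
  -- integrability of y² under ν
  have hx2ν : Integrable (fun y : ℝ => y ^ 2) ν := by
    rw [hν, integrable_map_measure ((continuous_pow 2).measurable).aestronglyMeasurable
      hX0meas.aemeasurable]
    exact hX0sq
  -- constant C and function Φ
  set C := 60 * max (Real.log (γ * Real.log 2)) 1 / (γ * Real.log 2) with hCdef
  have hCpos : 0 < C := by
    apply div_pos
    · have := le_max_right (Real.log (γ * Real.log 2)) 1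
      linarith
    · positivity
  set Φ : ℝ → ℝ := fun y => y ^ 2 * (C * (L y / L (L y))) with hΦdef
  have hΦint : Integrable Φ ν := by
    have hmeasΦ : Measurable Φ := by
      apply ((continuous_pow 2).measurable).mul
      exact measurable_const.mul (hLmeas.div (hLmeas.comp hLmeas))
    rw [hν, integrable_map_measure hmeasΦ.aestronglyMeasurable hX0meas.aemeasurable]
    have heq : (Φ ∘ X0) = fun ω => C * (X0 ω ^ 2 * L (X0 ω) / L (L (X0 ω))) := by
      funext ω; simp only [Function.comp, hΦdef]; ring
    rw [heq]
    exact hmom.const_mul C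
  set D := ∫ y, Φ y ∂ν with hDdef
  -- the functions G
  have hSmeas : ∀ r : ℕ, MeasurableSet {z : ℝ | (2:ℝ)^(γ*(r:ℝ)) < |z|} := fun r =>
    measurableSet_lt measurable_const measurable_abs
  set G : ℕ → ℝ := fun r => ∫ y, Set.indicator {z : ℝ | (2:ℝ)^(γ*(r:ℝ)) < |z|} (fun z => z ^ 2) y ∂ν
    with hGdef
  have hGint : ∀ r : ℕ, Integrable ((Set.indicator {z : ℝ | (2:ℝ)^(γ*(r:ℝ)) < |z|} (fun z => z ^ 2))) ν :=
    fun r => hx2ν.indicator (hSmeas r)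
  have hGnonneg : ∀ r : ℕ, 0 ≤ G r := by
    intro r
    apply integral_nonneg
    intro y
    exact Set.indicator_nonneg (fun z _ => sq_nonneg z) y
  -- key inequality for finite sums of G r / c r
  have key : ∀ s : Finset ℕ, (∀ r ∈ s, 2 ≤ r) →
      ∑ r ∈ s, G r / Real.log ((r:ℝ) * Real.log 2) ≤ D := by
    intro s hs
    have h1 : ∀ r ∈ s, G r / Real.log ((r:ℝ) * Real.log 2)
        = ∫ y, (Real.log ((r:ℝ) * Real.log 2))⁻¹
            * Set.indicator {z : ℝ | (2:ℝ)^(γ*(r:ℝ)) < |z|} (fun z => z ^ 2) y ∂ν := by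
      intro r hr
      simp only [hGdef]
      rw [integral_const_mul, div_eq_inv_mul]
    rw [Finset.sum_congr rfl h1,
      ← integral_finset_sum s (fun r _ => (hGint r).const_mul _)]
    apply integral_mono (integrable_finset_sum s (fun r _ => (hGint r).const_mul _)) hΦint
    intro y
    show ∑ r ∈ s, (Real.log ((r:ℝ) * Real.log 2))⁻¹
      * Set.indicator {z : ℝ | (2:ℝ)^(γ*(r:ℝ)) < |z|} (fun z => z ^ 2) y ≤ Φ y
    have hterm : ∀ r ∈ s, (Real.log ((r:ℝ) * Real.log 2))⁻¹
        * Set.indicator {z : ℝ | (2:ℝ)^(γ*(r:ℝ)) < |z|} (fun z => z ^ 2) y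
        = y ^ 2 * (if (2:ℝ)^(γ*(r:ℝ)) < |y| then (Real.log ((r:ℝ) * Real.log 2))⁻¹ else 0) := by
      intro r _
      rw [Set.indicator_apply]
      simp only [Set.mem_setOf_eq]
      split_ifs with h
      · ring
      · ring
    have e1 : L y = Real.log (Real.exp 1 + |y|) := hL y
    have e2 : L (L y) = Real.log (Real.exp 1 + Real.log (Real.exp 1 + |y|)) := by
      rw [hL (L y), abs_of_nonneg (le_trans zero_le_one (hL1 y)), e1]
    calc ∑ r ∈ s, (Real.log ((r:ℝ) * Real.log 2))⁻¹
          * Set.indicator {z : ℝ | (2:ℝ)^(γ*(r:ℝ)) < |z|} (fun z => z ^ 2) y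
        = y ^ 2 * ∑ r ∈ s, (if (2:ℝ)^(γ*(r:ℝ)) < |y| then (Real.log ((r:ℝ) * Real.log 2))⁻¹ else 0) := by
          rw [Finset.mul_sum]
          exact Finset.sum_congr rfl hterm
      _ ≤ y ^ 2 * (C * (L y / L (L y))) := by
          apply mul_le_mul_of_nonneg_left _ (sq_nonneg y)
          have := stmt9_lemma3 γ hγ y s hs
          rw [← e2, ← e1] at this
          exact this
      _ = Φ y := rfl
  -- measurability and integrability of T ℓ
  have hTmeas : ∀ ℓ, Measurable (T ℓ) := by
    intro ℓ
    have hfun : T ℓ = fun ω => if (2 : ℝ) ^ (γ * (Nat.log 2 ℓ : ℝ)) < |X ℓ ω| then X ℓ ω else 0 :=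
      funext (hT ℓ)
    rw [hfun]
    exact Measurable.ite (measurableSet_lt measurable_const (hXmeas ℓ).abs) (hXmeas ℓ)
      measurable_const
  have hXℓsq : ∀ ℓ, Integrable (fun ω => X ℓ ω ^ 2) μ := by
    intro ℓ
    have h1 : Integrable (fun y : ℝ => y ^ 2) (μ.map (X ℓ)) := by
      rw [hident ℓ]; exact hx2ν
    rw [integrable_map_measure ((continuous_pow 2).measurable).aestronglyMeasurable
      (hXmeas ℓ).aemeasurable] at h1
    exact h1
  have hXℓint : ∀ ℓ, Integrable (X ℓ) μ := by
    intro ℓ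
    apply Integrable.mono ((hXℓsq ℓ).add (integrable_const 1)) (hXmeas ℓ).aestronglyMeasurable
    filter_upwards with ω
    simp only [Pi.add_apply, Real.norm_eq_abs]
    have h1 : |X ℓ ω| ≤ X ℓ ω ^ 2 + 1 := by nlinarith [sq_abs (X ℓ ω), sq_nonneg (|X ℓ ω| - 1)]
    have h2 : (0:ℝ) ≤ X ℓ ω ^ 2 + 1 := by positivity
    rw [abs_of_nonneg h2]
    exact h1
  have hTsq : ∀ ℓ, Integrable (fun ω => T ℓ ω ^ 2) μ := by
    intro ℓ
    apply Integrable.mono (hXℓsq ℓ) ((hTmeas ℓ).pow_const 2).aestronglyMeasurable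
    filter_upwards with ω
    rw [Real.norm_eq_abs, Real.norm_eq_abs, abs_of_nonneg (sq_nonneg _),
      abs_of_nonneg (sq_nonneg _)]
    rw [hT ℓ ω]
    split_ifs with h
    · exact le_rfl
    · simpa using sq_nonneg (X ℓ ω)
  have hTint : ∀ ℓ, Integrable (T ℓ) μ := by
    intro ℓ
    apply Integrable.mono (hXℓint ℓ) (hTmeas ℓ).aestronglyMeasurable
    filter_upwards with ω
    rw [Real.norm_eq_abs, Real.norm_eq_abs, hT ℓ ω]
    split_ifs with h
    · exact le_rfl
    · simp [abs_nonneg]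
  -- variance bound
  have hvar : ∀ ℓ, ∫ ω, Xstar ℓ ω ^ 2 ∂μ ≤ ∫ ω, T ℓ ω ^ 2 ∂μ := by
    intro ℓ
    set c := ∫ ω, T ℓ ω ∂μ with hc
    have hexp : (fun ω => Xstar ℓ ω ^ 2) = fun ω => (T ℓ ω ^ 2 - (2*c) * T ℓ ω) + c ^ 2 := by
      funext ω; rw [hXstar ℓ ω]; ring
    have i1 : Integrable (fun ω => T ℓ ω ^ 2 - (2*c) * T ℓ ω) μ :=
      (hTsq ℓ).sub ((hTint ℓ).const_mul (2*c))
    have i2 : Integrable (fun ω => (2*c) * T ℓ ω) μ := (hTint ℓ).const_mul (2*c)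
    rw [hexp, integral_add i1 (integrable_const _), integral_sub (hTsq ℓ) i2,
      integral_const_mul, integral_const]
    simp only [measure_univ, probReal_univ, ENNReal.toReal_one, smul_eq_mul, one_mul]
    rw [← hc]
    nlinarith [sq_nonneg c]
  -- identity ∫ T² = G (log2 ℓ)
  have hTG : ∀ ℓ, ∫ ω, T ℓ ω ^ 2 ∂μ = G (Nat.log 2 ℓ) := by
    intro ℓ
    set r := Nat.log 2 ℓ with hr
    have h1 : (fun ω => T ℓ ω ^ 2)
        = (fun y => Set.indicator {z : ℝ | (2:ℝ)^(γ*(r:ℝ)) < |z|} (fun z => z ^ 2) y) ∘ (X ℓ) := by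
      funext ω
      simp only [Function.comp, Set.indicator_apply, Set.mem_setOf_eq]
      rw [hT ℓ ω]
      split_ifs with h
      · rfl
      · simp
    calc ∫ ω, T ℓ ω ^ 2 ∂μ
        = ∫ y, Set.indicator {z : ℝ | (2:ℝ)^(γ*(r:ℝ)) < |z|} (fun z => z ^ 2) y ∂(μ.map (X ℓ)) := by
          rw [integral_map (hXmeas ℓ).aemeasurable
            (((continuous_pow 2).measurable).indicator (hSmeas r)).aestronglyMeasurable]
          rw [h1]; rfl
      _ = G r := by rw [hident ℓ]
  -- quantities per n
  set g : ℕ → ℝ := fun t => G t / ((2:ℝ)^t * Real.log ((t:ℝ) * Real.log 2)) with hgdef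
  set f : ℕ → ℝ := fun n =>
    (∫ ω, (Xstar (n + 4) ω) ^ 2 ∂μ) / ((n + 4 : ℝ) * Real.log (Real.log (n + 4 : ℝ))) with hfdef
  have hr2 : ∀ n : ℕ, 2 ≤ Nat.log 2 (n + 4) := by
    intro n
    have h4 : Nat.log 2 4 ≤ Nat.log 2 (n + 4) := Nat.log_mono_right (by omega)
    have : Nat.log 2 4 = 2 := by
      have : (4:ℕ) = 2^2 := by norm_num
      rw [this, Nat.log_pow (by norm_num)]
    omega
  have hgnonneg : ∀ t : ℕ, 2 ≤ t → 0 ≤ g t := by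
    intro t ht
    have := stmt9_clow ht
    have := hGnonneg t
    apply div_nonneg this
    positivity
  have hmain : ∀ n : ℕ, 0 ≤ f n ∧ f n ≤ g (Nat.log 2 (n + 4)) := by
    intro n
    set r := Nat.log 2 (n + 4) with hrdef
    have hr2' := hr2 n
    have hclow := stmt9_clow hr2'
    have hnum0 : 0 ≤ ∫ ω, (Xstar (n + 4) ω) ^ 2 ∂μ := integral_nonneg fun ω => sq_nonneg _
    have hpow : (2:ℝ)^r ≤ (n:ℝ) + 4 := by
      have := Nat.pow_log_le_self 2 (show n + 4 ≠ 0 by omega)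
      have hcast : ((2 ^ r : ℕ) : ℝ) ≤ ((n + 4 : ℕ) : ℝ) := by exact_mod_cast this
      push_cast at hcast
      linarith
    have hpowpos : (0:ℝ) < (2:ℝ)^r := by positivity
    have hlog1 : (r:ℝ) * Real.log 2 ≤ Real.log ((n:ℝ) + 4) := by
      have := Real.log_le_log hpowpos hpow
      rwa [Real.log_pow] at this
    have hrl2 : (1:ℝ) < (r:ℝ) * Real.log 2 := by
      have : (2:ℝ) ≤ (r:ℝ) := by exact_mod_cast hr2'
      nlinarith
    have hll : Real.log ((r:ℝ) * Real.log 2) ≤ Real.log (Real.log ((n:ℝ) + 4)) :=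
      Real.log_le_log (by linarith) hlog1
    have hden : (2:ℝ)^r * Real.log ((r:ℝ) * Real.log 2) ≤ ((n:ℝ) + 4) * Real.log (Real.log ((n:ℝ) + 4)) := by
      apply mul_le_mul hpow hll (by linarith) (by linarith)
    have hdenpos : (0:ℝ) < (2:ℝ)^r * Real.log ((r:ℝ) * Real.log 2) := by
      apply mul_pos hpowpos; linarith
    constructor
    · apply div_nonneg hnum0
      linarith [hden, hdenpos]
    · have hnum : ∫ ω, (Xstar (n + 4) ω) ^ 2 ∂μ ≤ G r := by
        rw [hrdef, ← hTG (n + 4)]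
        exact hvar (n + 4)
      exact div_le_div₀ (hGnonneg r) hnum hdenpos hden
  -- summability
  apply summable_of_sum_range_le (c := D) (fun n => (hmain n).1)
  intro N
  calc ∑ n ∈ Finset.range N, f n
      ≤ ∑ n ∈ Finset.range N, g (Nat.log 2 (n + 4)) :=
        Finset.sum_le_sum fun n _ => (hmain n).2
    _ = ∑ t ∈ (Finset.range N).image (fun n => Nat.log 2 (n + 4)),
          ((Finset.range N).filter (fun n => Nat.log 2 (n + 4) = t)).card • g t :=
        Finset.sum_comp g (fun n => Nat.log 2 (n + 4))
    _ ≤ ∑ t ∈ (Finset.range N).image (fun n => Nat.log 2 (n + 4)),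
          G t / Real.log ((t:ℝ) * Real.log 2) := by
        apply Finset.sum_le_sum
        intro t ht
        obtain ⟨n, _, hn⟩ := Finset.mem_image.mp ht
        have ht2 : 2 ≤ t := hn ▸ hr2 n
        -- card bound
        have hcard : ((Finset.range N).filter (fun n => Nat.log 2 (n + 4) = t)).card ≤ 2 ^ t := by
          have hsub : (Finset.range N).filter (fun n => Nat.log 2 (n + 4) = t)
              ⊆ Finset.Ico (2 ^ t - 4) (2 ^ (t + 1) - 4) := by
            intro m hm
            obtain ⟨_, hmt⟩ := Finset.mem_filter.mp hm
            have h1 : 2 ^ t ≤ m + 4 := by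
              rw [← hmt]; exact Nat.pow_log_le_self 2 (by omega)
            have h2 : m + 4 < 2 ^ (t + 1) := by
              rw [← hmt]; exact Nat.lt_pow_succ_log_self (by norm_num) (m + 4)
            rw [Finset.mem_Ico]
            omega
          have h4t : 4 ≤ 2 ^ t := by
            calc 4 = 2 ^ 2 := by norm_num
              _ ≤ 2 ^ t := Nat.pow_le_pow_right (by norm_num) ht2
          calc ((Finset.range N).filter (fun n => Nat.log 2 (n + 4) = t)).card
              ≤ (Finset.Ico (2 ^ t - 4) (2 ^ (t + 1) - 4)).card := Finset.card_le_card hsub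
            _ = 2 ^ (t + 1) - 4 - (2 ^ t - 4) := Nat.card_Ico _ _
            _ ≤ 2 ^ t := by
                have : 2 ^ (t + 1) = 2 * 2 ^ t := by rw [pow_succ]; ring
                omega
        have hgt := hgnonneg t ht2
        rw [nsmul_eq_mul]
        have hle : (((Finset.range N).filter (fun n => Nat.log 2 (n + 4) = t)).card : ℝ) ≤ (2:ℝ)^t := by
          exact_mod_cast le_trans hcard (le_refl _)
        calc (((Finset.range N).filter (fun n => Nat.log 2 (n + 4) = t)).card : ℝ) * g t
            ≤ (2:ℝ)^t * g t := mul_le_mul_of_nonneg_right hle hgt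
          _ = G t / Real.log ((t:ℝ) * Real.log 2) := by
              rw [hgdef]
              have h2t : ((2:ℝ)^t) ≠ 0 := by positivity
              field_simp
    _ ≤ D := key _ (fun t ht => by
        obtain ⟨n, _, hn⟩ := Finset.mem_image.mp ht
        exact hn ▸ hr2 n)
end

section
/- Assume α^{-1}(u) ≤ C u^{-γ/(1-γ)} for some constant C > 0 and γ ∈ (0,1), and let Q be a quantile function with ∫_0^1 (L(Q(u))/L(L(Q(u)))) Q²(u) du < ∞. Then ∫_0^1 (L(α^{-1}(u))/L(L(α^{-1}(u)))) Q²(u) du < ∞. -/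
open MeasureTheory Real Set

private lemma one_le_logE {x : ℝ} (hx : 0 ≤ x) : 1 ≤ Real.log (Real.exp 1 + x) := by
  calc (1:ℝ) = Real.log (Real.exp 1) := (Real.log_exp 1).symm
  _ ≤ Real.log (Real.exp 1 + x) := Real.log_le_log (Real.exp_pos 1) (by linarith)

private lemma gmono {s t : ℝ} (hs : 0 < s) (hst : s ≤ t) :
    s / Real.log (Real.exp 1 + s) ≤ t / Real.log (Real.exp 1 + t) := by
  have ht : 0 < t := lt_of_lt_of_le hs hst
  have h1 : (0:ℝ) < Real.log (Real.exp 1 + s) := lt_of_lt_of_le one_pos (one_le_logE hs.le)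
  have h2 : (0:ℝ) < Real.log (Real.exp 1 + t) := lt_of_lt_of_le one_pos (one_le_logE ht.le)
  rw [div_le_div_iff₀ h1 h2]
  have key : Real.log (Real.exp 1 + t) ≤ Real.log (Real.exp 1 + s) + Real.log (t / s) := by
    rw [← Real.log_mul (by positivity) (by positivity)]
    apply Real.log_le_log (by positivity)
    have : (Real.exp 1 + s) * (t / s) = Real.exp 1 * t / s + t := by field_simp
    rw [this]
    have : Real.exp 1 ≤ Real.exp 1 * t / s := by
      rw [le_div_iff₀ hs]; nlinarith [Real.exp_pos 1]
    linarith
  have h3 : s * Real.log (t / s) ≤ t - s := by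
    have := Real.log_le_sub_one_of_pos (show (0:ℝ) < t / s by positivity)
    calc s * Real.log (t / s) ≤ s * (t / s - 1) := by nlinarith
    _ = t - s := by field_simp
  have h4 : (t - s) * 1 ≤ (t - s) * Real.log (Real.exp 1 + s) :=
    mul_le_mul_of_nonneg_left (one_le_logE hs.le) (by linarith)
  nlinarith

private lemma fmono {x y : ℝ} (hx : 0 ≤ x) (hxy : x ≤ y) :
    Real.log (Real.exp 1 + x) / Real.log (Real.exp 1 + Real.log (Real.exp 1 + x)) ≤
    Real.log (Real.exp 1 + y) / Real.log (Real.exp 1 + Real.log (Real.exp 1 + y)) :=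
  gmono (lt_of_lt_of_le one_pos (one_le_logE hx))
    (Real.log_le_log (by positivity) (by linarith))

private lemma keyB {c t n : ℝ} (hc : 0 ≤ c) (ht : 0 ≤ t) (hn : 0 ≤ n) :
    Real.exp 1 + c * t ^ n ≤ (Real.exp 1 + c) * (Real.exp 1 + t) ^ n := by
  have h1 : (1:ℝ) ≤ (Real.exp 1 + t) ^ n := by
    calc (1:ℝ) = 1 ^ n := (Real.one_rpow n).symm
    _ ≤ (Real.exp 1 + t) ^ n :=
      Real.rpow_le_rpow zero_le_one (by nlinarith [Real.exp_pos 1, Real.one_le_exp zero_le_one]) hn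
  have h2 : t ^ n ≤ (Real.exp 1 + t) ^ n :=
    Real.rpow_le_rpow ht (by nlinarith [Real.exp_pos 1]) hn
  nlinarith [Real.exp_pos 1]

private lemma keyLog {c t n : ℝ} (hc : 0 ≤ c) (ht : 0 ≤ t) (hn : 0 ≤ n) :
    Real.log (Real.exp 1 + c * t ^ n) ≤
      Real.log (Real.exp 1 + c) + n * Real.log (Real.exp 1 + t) := by
  have he := Real.exp_pos 1
  have h1 : (0:ℝ) < Real.exp 1 + t := by linarith
  calc Real.log (Real.exp 1 + c * t ^ n)
      ≤ Real.log ((Real.exp 1 + c) * (Real.exp 1 + t) ^ n) := by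
        apply Real.log_le_log (by positivity) (keyB hc ht hn)
  _ = Real.log (Real.exp 1 + c) + n * Real.log (Real.exp 1 + t) := by
      rw [Real.log_mul (by positivity) (by positivity), Real.log_rpow h1]

private lemma keyC {c t n : ℝ} (hc : 1 ≤ c) (ht : 1 ≤ t) (hn : 1 ≤ n) :
    Real.log (Real.exp 1 + c * t ^ n) /
        Real.log (Real.exp 1 + Real.log (Real.exp 1 + c * t ^ n)) ≤
      (Real.log (Real.exp 1 + c) + n) *
        (Real.log (Real.exp 1 + t) / Real.log (Real.exp 1 + Real.log (Real.exp 1 + t))) := by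
  have he := Real.exp_pos 1
  have ht0 : (0:ℝ) ≤ t := by linarith
  have htn : t ≤ c * t ^ n := by
    calc t = t ^ (1:ℝ) := (Real.rpow_one t).symm
    _ ≤ t ^ n := Real.rpow_le_rpow_of_exponent_le ht hn
    _ = 1 * t ^ n := (one_mul _).symm
    _ ≤ c * t ^ n := mul_le_mul_of_nonneg_right hc (by positivity)
  have hLt1 : (1:ℝ) ≤ Real.log (Real.exp 1 + t) := one_le_logE ht0
  have hLn1 : (1:ℝ) ≤ Real.log (Real.exp 1 + c * t ^ n) := one_le_logE (by linarith)
  have hden1 : (0:ℝ) < Real.log (Real.exp 1 + Real.log (Real.exp 1 + t)) :=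
    lt_of_lt_of_le one_pos (one_le_logE (by linarith))
  have hdenmono : Real.log (Real.exp 1 + Real.log (Real.exp 1 + t)) ≤
      Real.log (Real.exp 1 + Real.log (Real.exp 1 + c * t ^ n)) := by
    apply Real.log_le_log (by positivity)
    have := Real.log_le_log (show (0:ℝ) < Real.exp 1 + t by positivity)
      (show Real.exp 1 + t ≤ Real.exp 1 + c * t ^ n by linarith)
    linarith
  calc Real.log (Real.exp 1 + c * t ^ n) /
        Real.log (Real.exp 1 + Real.log (Real.exp 1 + c * t ^ n))
      ≤ Real.log (Real.exp 1 + c * t ^ n) /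
        Real.log (Real.exp 1 + Real.log (Real.exp 1 + t)) :=
        div_le_div_of_nonneg_left (by linarith) hden1 hdenmono
  _ ≤ ((Real.log (Real.exp 1 + c) + n) * Real.log (Real.exp 1 + t)) /
        Real.log (Real.exp 1 + Real.log (Real.exp 1 + t)) := by
        gcongr
        have h1 := keyLog (show (0:ℝ) ≤ c by linarith) ht0 (show (0:ℝ) ≤ n by linarith)
        have hc1 : (1:ℝ) ≤ Real.log (Real.exp 1 + c) := one_le_logE (by linarith)
        nlinarith
  _ = (Real.log (Real.exp 1 + c) + n) *
        (Real.log (Real.exp 1 + t) / Real.log (Real.exp 1 + Real.log (Real.exp 1 + t))) := by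
      rw [mul_div_assoc]

set_option maxHeartbeats 2000000 in
theorem stmt11 (C γ : ℝ) (hC : 0 < C) (hγ : γ ∈ Ioo (0:ℝ) 1)
    (αinv : ℝ → ℕ)
    (hαinv : ∀ u ∈ Ioc (0:ℝ) 1, (αinv u : ℝ) ≤ C * u ^ (-(γ / (1 - γ))))
    (Q : ℝ → ℝ) (hQpos : ∀ u ∈ Ioc (0:ℝ) 1, 0 ≤ Q u)
    (hQmono : AntitoneOn Q (Ioc (0:ℝ) 1))
    (L : ℝ → ℝ) (hL : ∀ x, L x = Real.log (Real.exp 1 + |x|))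
    (hint : ∫⁻ u in Ioc (0:ℝ) 1,
        ENNReal.ofReal ((L (Q u) / L (L (Q u))) * Q u ^ 2) < ⊤) :
    ∫⁻ u in Ioc (0:ℝ) 1,
        ENNReal.ofReal ((L (αinv u) / L (L (αinv u))) * Q u ^ 2) < ⊤ := by
  obtain ⟨hγ0, hγ1⟩ := hγ
  have hβ0 : 0 < γ / (1 - γ) := div_pos hγ0 (by linarith)
  set β : ℝ := γ / (1 - γ) with hβdef
  set C₁ : ℝ := max C 1 with hC₁def
  have hC₁1 : (1:ℝ) ≤ C₁ := le_max_right _ _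
  have hC₁0 : (0:ℝ) ≤ C₁ := by linarith
  set N : ℝ := max (4 * β) 1 with hNdef
  have hN1 : (1:ℝ) ≤ N := le_max_right _ _
  have hN4β : 4 * β ≤ N := le_max_left _ _
  set K : ℝ := Real.log (Real.exp 1 + C₁) + N with hKdef
  have hlogC₁1 : (1:ℝ) ≤ Real.log (Real.exp 1 + C₁) := one_le_logE hC₁0
  have hK1 : (1:ℝ) ≤ K := by rw [hKdef]; linarith
  have hK0 : (0:ℝ) ≤ K := by linarith
  set D : ℝ := K * (Real.log (Real.exp 1 + 1) + 4) with hDdef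
  have hlog1 : (1:ℝ) ≤ Real.log (Real.exp 1 + 1) := one_le_logE zero_le_one
  have hD0 : (0:ℝ) ≤ D := by rw [hDdef]; nlinarith
  have hpt : ∀ u ∈ Ioc (0:ℝ) 1,
      (L (αinv u) / L (L (αinv u))) * Q u ^ 2 ≤
        K * ((L (Q u) / L (L (Q u))) * Q u ^ 2) + D * u ^ (-(3/4) : ℝ) := by
    intro u hu
    obtain ⟨hu0, hu1⟩ := hu
    have hq0 : 0 ≤ Q u := hQpos u ⟨hu0, hu1⟩
    have ha0 : (0:ℝ) ≤ (αinv u : ℝ) := Nat.cast_nonneg _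
    have hL1 : ∀ x : ℝ, 1 ≤ L x := fun x => by rw [hL]; exact one_le_logE (abs_nonneg x)
    have hLnn : ∀ x : ℝ, 0 ≤ x → L x = Real.log (Real.exp 1 + x) := fun x hx => by
      rw [hL, abs_of_nonneg hx]
    have hLL : ∀ x : ℝ, 0 ≤ x →
        L (L x) = Real.log (Real.exp 1 + Real.log (Real.exp 1 + x)) := fun x hx => by
      rw [hLnn _ (le_trans zero_le_one (hL1 x)), hLnn x hx]
    rw [hLL _ ha0, hLL _ hq0, hLnn _ ha0, hLnn _ hq0]
    set t : ℝ := u ^ (-(1/4) : ℝ) with htdef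
    have ht1 : (1:ℝ) ≤ t :=
      Real.one_le_rpow_of_pos_of_le_one_of_nonpos hu0 hu1 (by norm_num)
    have ht0 : (0:ℝ) < t := lt_of_lt_of_le one_pos ht1
    have hrt : u ^ (-(3/4) : ℝ) = t ^ (3:ℕ) := by
      rw [htdef, ← Real.rpow_natCast (u ^ (-(1/4):ℝ)) 3, ← Real.rpow_mul hu0.le]
      norm_num
    have hau : (αinv u : ℝ) ≤ C₁ * u ^ (-β) :=
      (hαinv u ⟨hu0, hu1⟩).trans
        (mul_le_mul_of_nonneg_right (le_max_left C 1) (by positivity))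
    have hFq0 : (0:ℝ) ≤ Real.log (Real.exp 1 + Q u) /
        Real.log (Real.exp 1 + Real.log (Real.exp 1 + Q u)) * Q u ^ 2 := by
      have h1 := one_le_logE hq0
      have h2 := one_le_logE (le_trans zero_le_one (one_le_logE hq0))
      positivity
    have hDr0 : (0:ℝ) ≤ D * u ^ (-(3/4) : ℝ) := mul_nonneg hD0 (by positivity)
    by_cases hcase : t ≤ Q u
    · have h1 : u ^ (-β) ≤ t ^ N := by
        rw [htdef, ← Real.rpow_mul hu0.le]
        apply Real.rpow_le_rpow_of_exponent_ge hu0 hu1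
        nlinarith
      have hac : (αinv u : ℝ) ≤ C₁ * t ^ N :=
        hau.trans (mul_le_mul_of_nonneg_left h1 hC₁0)
      have step1 := fmono ha0 hac
      have step2 := keyC hC₁1 ht1 hN1
      have step3 := fmono ht0.le hcase
      have hkey : Real.log (Real.exp 1 + (αinv u : ℝ)) /
          Real.log (Real.exp 1 + Real.log (Real.exp 1 + (αinv u : ℝ))) ≤
          K * (Real.log (Real.exp 1 + Q u) /
            Real.log (Real.exp 1 + Real.log (Real.exp 1 + Q u))) :=
        step1.trans (step2.trans (mul_le_mul_of_nonneg_left step3 hK0))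
      have := mul_le_mul_of_nonneg_right hkey (pow_nonneg hq0 2)
      calc Real.log (Real.exp 1 + (αinv u : ℝ)) /
          Real.log (Real.exp 1 + Real.log (Real.exp 1 + (αinv u : ℝ))) * Q u ^ 2
          ≤ K * (Real.log (Real.exp 1 + Q u) /
            Real.log (Real.exp 1 + Real.log (Real.exp 1 + Q u))) * Q u ^ 2 := this
        _ = K * (Real.log (Real.exp 1 + Q u) /
            Real.log (Real.exp 1 + Real.log (Real.exp 1 + Q u)) * Q u ^ 2) := by ring
        _ ≤ K * (Real.log (Real.exp 1 + Q u) /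
            Real.log (Real.exp 1 + Real.log (Real.exp 1 + Q u)) * Q u ^ 2) +
            D * u ^ (-(3/4) : ℝ) := le_add_of_nonneg_right hDr0
    · push_neg at hcase
      have hs1 : (1:ℝ) ≤ u⁻¹ := by
        have := one_div_le_one_div_of_le hu0 hu1
        simpa using this
      have hs0 : (0:ℝ) ≤ u⁻¹ := by linarith
      have h2 : u ^ (-β) ≤ u⁻¹ ^ N := by
        have hinv : u⁻¹ ^ N = u ^ ((-1) * N) := by
          rw [Real.rpow_mul hu0.le, Real.rpow_neg_one]
        rw [hinv]
        apply Real.rpow_le_rpow_of_exponent_ge hu0 hu1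
        nlinarith
      have hac2 : (αinv u : ℝ) ≤ C₁ * u⁻¹ ^ N :=
        hau.trans (mul_le_mul_of_nonneg_left h2 hC₁0)
      have hFa_le : Real.log (Real.exp 1 + (αinv u : ℝ)) /
          Real.log (Real.exp 1 + Real.log (Real.exp 1 + (αinv u : ℝ))) ≤
          Real.log (Real.exp 1 + (αinv u : ℝ)) :=
        div_le_self (by linarith [one_le_logE ha0])
          (one_le_logE (le_trans zero_le_one (one_le_logE ha0)))
      have hlog_a : Real.log (Real.exp 1 + (αinv u : ℝ)) ≤
          Real.log (Real.exp 1 + C₁ * u⁻¹ ^ N) :=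
        Real.log_le_log (by positivity) (by linarith)
      have hkl := keyLog hC₁0 hs0 (by linarith : (0:ℝ) ≤ N)
      have hlogs : Real.log (Real.exp 1 + u⁻¹) ≤
          Real.log (Real.exp 1 + 1) + Real.log u⁻¹ := by
        rw [← Real.log_mul (by positivity) (by positivity)]
        apply Real.log_le_log (by positivity)
        nlinarith [Real.exp_pos 1]
      have hlogu : Real.log u⁻¹ ≤ 4 * t := by
        have heq : Real.log u⁻¹ = 4 * Real.log t := by
          rw [htdef, Real.log_rpow hu0, Real.log_inv]; ring
        rw [heq]
        have := Real.log_le_sub_one_of_pos ht0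
        linarith
      have hFa : Real.log (Real.exp 1 + (αinv u : ℝ)) /
          Real.log (Real.exp 1 + Real.log (Real.exp 1 + (αinv u : ℝ))) ≤ D * t := by
        have hchain : Real.log (Real.exp 1 + (αinv u : ℝ)) ≤
            Real.log (Real.exp 1 + C₁) + N * (Real.log (Real.exp 1 + 1) + 4 * t) := by
          have : N * Real.log (Real.exp 1 + u⁻¹) ≤
              N * (Real.log (Real.exp 1 + 1) + 4 * t) := by
            apply mul_le_mul_of_nonneg_left _ (by linarith)
            linarith
          linarith
        have hfac : (1:ℝ) ≤ Real.log (Real.exp 1 + 1) + 4 * t := by nlinarith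
        have hDd : Real.log (Real.exp 1 + C₁) + N * (Real.log (Real.exp 1 + 1) + 4 * t) ≤
            D * t := by
          rw [hDdef, hKdef]
          have hlt : (1:ℝ) ≤ Real.log (Real.exp 1 + 1) * t := by nlinarith
          have q1 : (0:ℝ) ≤ Real.log (Real.exp 1 + C₁) * (Real.log (Real.exp 1 + 1) * t - 1) :=
            mul_nonneg (by linarith) (by linarith)
          have q2 : (0:ℝ) ≤ 4 * Real.log (Real.exp 1 + C₁) * t := by positivity
          have q3 : (0:ℝ) ≤ N * Real.log (Real.exp 1 + 1) * (t - 1) :=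
            mul_nonneg (mul_nonneg (by linarith) (by linarith)) (by linarith)
          nlinarith [q1, q2, q3]
        exact hFa_le.trans (hchain.trans hDd)
      have hQt : Q u ^ 2 ≤ t ^ 2 := by nlinarith
      calc Real.log (Real.exp 1 + (αinv u : ℝ)) /
          Real.log (Real.exp 1 + Real.log (Real.exp 1 + (αinv u : ℝ))) * Q u ^ 2
          ≤ (D * t) * t ^ 2 := by
            apply mul_le_mul hFa hQt (pow_nonneg hq0 2) (by positivity)
        _ = D * t ^ (3:ℕ) := by ring
        _ = D * u ^ (-(3/4) : ℝ) := by rw [hrt]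
        _ ≤ K * (Real.log (Real.exp 1 + Q u) /
            Real.log (Real.exp 1 + Real.log (Real.exp 1 + Q u)) * Q u ^ 2) +
            D * u ^ (-(3/4) : ℝ) := le_add_of_nonneg_left (mul_nonneg hK0 hFq0)
  have hconstmul : ∀ (c : ENNReal) (g : ℝ → ENNReal), c ≠ ⊤ →
      ∫⁻ u in Ioc (0:ℝ) 1, c * g u ≤ c * ∫⁻ u in Ioc (0:ℝ) 1, g u := by
    intro c g hc
    rcases eq_or_ne c 0 with rfl | hc0
    · simp
    · calc ∫⁻ u in Ioc (0:ℝ) 1, c * g u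
          = c * (c⁻¹ * ∫⁻ u in Ioc (0:ℝ) 1, c * g u) := by
            rw [← mul_assoc, ENNReal.mul_inv_cancel hc0 hc, one_mul]
      _ ≤ c * ∫⁻ u in Ioc (0:ℝ) 1, c⁻¹ * (c * g u) :=
          mul_le_mul_right (lintegral_const_mul_le _ _) _
      _ = c * ∫⁻ u in Ioc (0:ℝ) 1, g u := by
          congr 1
          apply lintegral_congr
          intro u
          rw [← mul_assoc, ENNReal.inv_mul_cancel hc0 hc, one_mul]
  have hrint : ∫⁻ u in Ioc (0:ℝ) 1, ENNReal.ofReal (u ^ (-(3/4) : ℝ)) < ⊤ := by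
    have hio : IntegrableOn (fun u : ℝ => u ^ (-(3/4) : ℝ)) (Ioc (0:ℝ) 1) := by
      rw [IntegrableOn, ← Measure.restrict_congr_set Ioo_ae_eq_Ioc]
      exact (intervalIntegral.integrableOn_Ioo_rpow_iff one_pos).2 (by norm_num)
    exact hio.lintegral_lt_top
  have hmeas : Measurable (fun u : ℝ =>
      ENNReal.ofReal D * ENNReal.ofReal (u ^ (-(3/4) : ℝ))) := by
    fun_prop
  calc ∫⁻ u in Ioc (0:ℝ) 1,
        ENNReal.ofReal ((L (αinv u) / L (L (αinv u))) * Q u ^ 2)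
      ≤ ∫⁻ u in Ioc (0:ℝ) 1,
        (ENNReal.ofReal K * ENNReal.ofReal ((L (Q u) / L (L (Q u))) * Q u ^ 2) +
          ENNReal.ofReal D * ENNReal.ofReal (u ^ (-(3/4) : ℝ))) := by
        apply lintegral_mono_ae
        rw [ae_restrict_iff' measurableSet_Ioc]
        filter_upwards with u hu
        calc ENNReal.ofReal ((L (αinv u) / L (L (αinv u))) * Q u ^ 2)
            ≤ ENNReal.ofReal (K * ((L (Q u) / L (L (Q u))) * Q u ^ 2) +
              D * u ^ (-(3/4) : ℝ)) := ENNReal.ofReal_le_ofReal (hpt u hu)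
          _ ≤ ENNReal.ofReal (K * ((L (Q u) / L (L (Q u))) * Q u ^ 2)) +
              ENNReal.ofReal (D * u ^ (-(3/4) : ℝ)) := ENNReal.ofReal_add_le
          _ = ENNReal.ofReal K * ENNReal.ofReal ((L (Q u) / L (L (Q u))) * Q u ^ 2) +
              ENNReal.ofReal D * ENNReal.ofReal (u ^ (-(3/4) : ℝ)) := by
              rw [ENNReal.ofReal_mul hK0, ENNReal.ofReal_mul hD0]
    _ = (∫⁻ u in Ioc (0:ℝ) 1,
          ENNReal.ofReal K * ENNReal.ofReal ((L (Q u) / L (L (Q u))) * Q u ^ 2)) +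
        ∫⁻ u in Ioc (0:ℝ) 1,
          ENNReal.ofReal D * ENNReal.ofReal (u ^ (-(3/4) : ℝ)) :=
        lintegral_add_right _ hmeas
    _ < ⊤ := by
        apply ENNReal.add_lt_top.2
        constructor
        · exact lt_of_le_of_lt (hconstmul _ _ ENNReal.ofReal_ne_top)
            (ENNReal.mul_lt_top ENNReal.ofReal_lt_top hint)
        · exact lt_of_le_of_lt (hconstmul _ _ ENNReal.ofReal_ne_top)
            (ENNReal.mul_lt_top ENNReal.ofReal_lt_top hrint)
end

section
/- Let T be a linear contraction on a Hilbert space H and x ∈ H with sup_{n≥1} ‖∑_{k=0}^n T^k x‖ < ∞. Then there exists z ∈ H such that x = z − T z. -/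
set_option maxHeartbeats 1000000 in
open Filter Topology Metric InnerProductSpace in
theorem stmt14 {H : Type*} [NormedAddCommGroup H] [InnerProductSpace ℂ H] [CompleteSpace H]
    (T : H →L[ℂ] H) (hT : ‖T‖ ≤ 1) (x : H)
    (hbdd : BddAbove (Set.range fun n : ℕ => ‖∑ k ∈ Finset.range (n + 1), (T ^ k) x‖)) :
    ∃ z : H, x = z - T z := by
  classical
  obtain ⟨M, hM⟩ := hbdd
  set s : ℕ → H := fun n => ∑ k ∈ Finset.range (n + 1), (T ^ k) x with hs
  have hMs : ∀ n, ‖s n‖ ≤ M := fun n => hM ⟨n, rfl⟩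
  have hM0 : 0 ≤ M := le_trans (norm_nonneg _) (hMs 0)
  set z : ℕ → H := fun n => ((n : ℂ) + 1)⁻¹ • ∑ j ∈ Finset.range (n + 1), s j with hz
  have hs0 : s 0 = x := by simp [hs]
  -- T (s j) = s (j+1) - x
  have hTs : ∀ j, T (s j) = s (j + 1) - x := by
    intro j
    have h1 : T (s j) = ∑ k ∈ Finset.range (j + 1), (T ^ (k + 1)) x := by
      rw [hs, map_sum]
      refine Finset.sum_congr rfl fun k _ => ?_
      rw [pow_succ']
      rfl
    have h2 : s (j + 1) = (∑ k ∈ Finset.range (j + 1), (T ^ (k + 1)) x) + (T ^ 0) x :=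
      Finset.sum_range_succ' _ _
    rw [h1, h2]
    simp
  -- key identity: z n - T (z n) = ((n:ℂ)+1)⁻¹ • (x - s (n+1)) + x
  have hkey : ∀ n, z n - T (z n) = ((n : ℂ) + 1)⁻¹ • (x - s (n + 1)) + x := by
    intro n
    have hne : ((n : ℂ) + 1) ≠ 0 := by
      exact_mod_cast Nat.cast_add_one_ne_zero (R := ℂ) n
    have hsum : (∑ j ∈ Finset.range (n + 1), s j) - T (∑ j ∈ Finset.range (n + 1), s j)
        = (x - s (n + 1)) + ((n : ℂ) + 1) • x := by
      rw [map_sum, ← Finset.sum_sub_distrib]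
      have : ∀ j ∈ Finset.range (n + 1), s j - T (s j) = (s j - s (j + 1)) + x := by
        intro j _
        rw [hTs j]; abel
      rw [Finset.sum_congr rfl this, Finset.sum_add_distrib, Finset.sum_range_sub' s,
        Finset.sum_const, hs0, Finset.card_range, ← Nat.cast_smul_eq_nsmul ℂ]
      push_cast
      ring_nf
    calc z n - T (z n) = ((n : ℂ) + 1)⁻¹ •
          ((∑ j ∈ Finset.range (n + 1), s j) - T (∑ j ∈ Finset.range (n + 1), s j)) := by
            rw [hz]; simp [map_smul, smul_sub]
      _ = ((n : ℂ) + 1)⁻¹ • (x - s (n + 1)) + ((n : ℂ) + 1)⁻¹ • (((n : ℂ) + 1) • x) := by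
            rw [hsum, smul_add]
      _ = ((n : ℂ) + 1)⁻¹ • (x - s (n + 1)) + x := by
            rw [smul_smul, inv_mul_cancel₀ hne, one_smul]
  -- convergence of (z n - T (z n)) to x
  have hd : Tendsto (fun n => z n - T (z n)) atTop (𝓝 x) := by
    have hnorm : ∀ n : ℕ, ‖(z n - T (z n)) - x‖ ≤ (1 / ((n : ℝ) + 1)) * (‖x‖ + M) := by
      intro n
      rw [hkey n, add_sub_cancel_right, norm_smul]
      have h1 : ‖((n : ℂ) + 1)⁻¹‖ = 1 / ((n : ℝ) + 1) := by
        rw [norm_inv]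
        norm_cast
        simp [Complex.norm_natCast]
      rw [h1]
      gcongr
      exact le_trans (norm_sub_le _ _) (by gcongr; exact hMs (n + 1))
    have hz0 : Tendsto (fun n : ℕ => (1 / ((n : ℝ) + 1)) * (‖x‖ + M)) atTop (𝓝 0) := by
      simpa using tendsto_one_div_add_atTop_nhds_zero_nat.mul_const (‖x‖ + M)
    rw [tendsto_iff_norm_sub_tendsto_zero]
    exact squeeze_zero (fun n => norm_nonneg _) hnorm hz0
  -- bound on z n
  have hzb : ∀ n, ‖z n‖ ≤ M := by
    intro n
    have h1 : ‖∑ j ∈ Finset.range (n + 1), s j‖ ≤ ((n : ℝ) + 1) * M := by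
      refine le_trans (norm_sum_le _ _) ?_
      calc ∑ j ∈ Finset.range (n + 1), ‖s j‖ ≤ ∑ _j ∈ Finset.range (n + 1), M :=
            Finset.sum_le_sum fun j _ => hMs j
        _ = ((n : ℝ) + 1) * M := by simp [Finset.sum_const, Finset.card_range, mul_comm]
    have h2 : ‖((n : ℂ) + 1)⁻¹‖ = ((n : ℝ) + 1)⁻¹ := by
      rw [norm_inv]; norm_cast
    have hpos : (0 : ℝ) < (n : ℝ) + 1 := by positivity
    calc ‖z n‖ = ((n : ℝ) + 1)⁻¹ * ‖∑ j ∈ Finset.range (n + 1), s j‖ := by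
          rw [hz]; simp only [norm_smul, h2]
      _ ≤ ((n : ℝ) + 1)⁻¹ * (((n : ℝ) + 1) * M) := by gcongr
      _ = M := by field_simp
  -- weak cluster point via Banach-Alaoglu
  set D := InnerProductSpace.toDual ℂ H with hD
  set φ : ℕ → WeakDual ℂ H := fun n => StrongDual.toWeakDual (D (z n)) with hφ
  have hK : IsCompact (WeakDual.toStrongDual ⁻¹' closedBall (0 : StrongDual ℂ H) M) :=
    WeakDual.isCompact_closedBall (𝕜 := ℂ) (E := H) 0 M
  have hmem : ∀ n, φ n ∈ WeakDual.toStrongDual ⁻¹' closedBall (0 : StrongDual ℂ H) M := by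
    intro n
    simp only [Set.mem_preimage, mem_closedBall, dist_zero_right]
    calc ‖(WeakDual.toStrongDual (φ n) : StrongDual ℂ H)‖ = ‖D (z n)‖ := rfl
      _ = ‖z n‖ := D.norm_map _
      _ ≤ M := hzb n
  have hle : Filter.map φ atTop ≤ Filter.principal
      (WeakDual.toStrongDual ⁻¹' closedBall (0 : StrongDual ℂ H) M) :=
    le_principal_iff.2 (Filter.eventually_map.mpr (Filter.Eventually.of_forall hmem))
  obtain ⟨ψ, -, hψ⟩ := hK.exists_clusterPt hle
  set w : H := D.symm (WeakDual.toStrongDual ψ) with hw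
  refine ⟨w, ?_⟩
  refine ext_inner_right ℂ fun v => ?_
  -- inner products: the test functional
  set A := ContinuousLinearMap.adjoint T with hA
  have hgcont : Continuous fun ρ : WeakDual ℂ H => ρ v - ρ (A v) :=
    (WeakDual.eval_continuous v).sub (WeakDual.eval_continuous (A v))
  have hcl : MapClusterPt (ψ v - ψ (A v)) atTop (fun n => φ n v - φ n (A v)) :=
    MapClusterPt.continuousAt_comp hgcont.continuousAt hψ
  have hφval : ∀ n, φ n v - φ n (A v) = inner ℂ (z n - T (z n)) v := by
    intro n
    have h1 : φ n v = inner ℂ (z n) v := rfl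
    have h2 : φ n (A v) = inner ℂ (z n) (A v) := rfl
    rw [h1, h2, ContinuousLinearMap.adjoint_inner_right, inner_sub_left]
  have htend : Tendsto (fun n => φ n v - φ n (A v)) atTop (𝓝 (inner ℂ x v : ℂ)) := by
    simp only [hφval]
    exact hd.inner tendsto_const_nhds
  have heq : ψ v - ψ (A v) = inner ℂ x v := by
    have h1 : NeBot (𝓝 (ψ v - ψ (A v)) ⊓ Filter.map (fun n => φ n v - φ n (A v)) atTop) :=
      hcl.clusterPt
    have h2 : Filter.map (fun n => φ n v - φ n (A v)) atTop ≤ 𝓝 (inner ℂ x v : ℂ) := htend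
    exact eq_of_nhds_neBot (h1.mono (inf_le_inf_left _ h2))
  have hψv : ∀ u : H, ψ u = inner ℂ w u := by
    intro u
    have : WeakDual.toStrongDual ψ = D w := by rw [hw]; simp
    calc ψ u = (WeakDual.toStrongDual ψ) u := rfl
      _ = (D w) u := by rw [this]
      _ = inner ℂ w u := InnerProductSpace.toDual_apply_apply
  calc inner ℂ x v = ψ v - ψ (A v) := heq.symm
    _ = inner ℂ w v - inner ℂ w (A v) := by rw [hψv, hψv]
    _ = inner ℂ (w - T w) v := by
        rw [ContinuousLinearMap.adjoint_inner_right, inner_sub_left]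
end
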